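/- A topological space has T₀ separation if and only if every finite subset is scattered (as a subspace). -/

import Mathlib

open Set Topology

variable {X : Type*} [TopologicalSpace X]

/-- A set is semi-open if it is contained in the closure of its interior. -/
def SemiOpen (A : Set X) : Prop := A ⊆ closure (interior A)

/-- A set is sg-closed if `A ∪ interior (closure A)` (= its semi-closure) is contained in
every semi-open superset of `A`. -/
def SgClosed (A : Set X) : Prop :=
  ∀ U : Set X, SemiOpen U → A ⊆ U → A ∪ interior (closure A) ⊆ U

/-- A set is sg-open if its complement is sg-closed. -/
def SgOpen (A : Set X) : Prop := SgClosed Aᶜ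


/-- A subset `S` is scattered: every nonempty subset of `S` has a point isolated in it. -/
def Scattered (S : Set X) : Prop :=
  ∀ T ⊆ S, T.Nonempty → ∃ x ∈ T, ∃ U : Set X, IsOpen U ∧ U ∩ T = {x}

theorem t0_iff_finite_scattered :
    T0Space X ↔ ∀ S : Set X, S.Finite → Scattered S := by
  constructor
  · intro hT0 S hS T hTS hTne
    have hTfin : T.Finite := hS.subset hTS
    obtain ⟨x, hxT, hmax⟩ :=
      Set.Finite.exists_maximalFor (fun y => closure {y} ∩ T) T hTfin hTne
    refine ⟨x, hxT, (⋃ y ∈ {y ∈ T | x ∉ closure {y}}, closure {y})ᶜ, ?_, ?_⟩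
    · refine isOpen_compl_iff.mpr (Set.Finite.isClosed_biUnion
        (hTfin.subset (sep_subset _ _)) fun y _ => isClosed_closure)
    · ext z
      simp only [mem_inter_iff, mem_compl_iff, mem_iUnion, mem_singleton_iff,
        mem_sep_iff, exists_prop, not_exists, not_and]
      constructor
      · rintro ⟨hz1, hz2⟩
        have hxz : x ∈ closure {z} := by
          by_contra hxc
          exact hz1 z ⟨hz2, hxc⟩ (subset_closure rfl)
        -- closure {x} ⊆ closure {z}
        have hcl : closure ({x} : Set X) ⊆ closure {z} :=
          closure_minimal (singleton_subset_iff.mpr hxz) isClosed_closure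
        have heq := le_antisymm (inter_subset_inter_left _ hcl)
          (hmax hz2 (inter_subset_inter_left _ hcl))
        have hzx : z ∈ closure ({x} : Set X) := by
          have : z ∈ closure ({z} : Set X) ∩ T := ⟨subset_closure rfl, hz2⟩
          rw [← heq] at this
          exact this.1
        exact (((specializes_iff_mem_closure.mpr hzx).antisymm
          (specializes_iff_mem_closure.mpr hxz)).eq).symm
      · rintro rfl
        exact ⟨fun y hy => hy.2, hxT⟩
  · intro h
    refine (t0Space_iff_inseparable X).mpr fun x y hins => ?_
    obtain ⟨a, haT, U, hU, hUT⟩ :=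
      h {x, y} (toFinite _) {x, y} subset_rfl ⟨x, by simp⟩
    have haU : a ∈ U := by
      have : a ∈ U ∩ {x, y} := hUT ▸ rfl
      exact this.1
    have hxy : x ∈ U ↔ y ∈ U := hins.mem_open_iff hU
    have hxU : x ∈ U := by
      rcases haT with rfl | rfl
      · exact haU
      · exact hxy.mpr haU
    have h1 : x ∈ U ∩ ({x, y} : Set X) := ⟨hxU, by simp⟩
    have h2 : y ∈ U ∩ ({x, y} : Set X) := ⟨hxy.mp hxU, by simp⟩
    rw [hUT] at h1 h2
    exact h1.trans h2.symm
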